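/- Let A, K, W : ℝ → ℝ be twice differentiable at 0 with A(0) = K(0) = 0, A'(0) = K'(0) = 0, K(t) ≥ 0, A(t) ≥ 0, and let W > 0 be a constant. Define C(t) = (1/2)[A(t) − W + √((A(t) − W)² + 4·W·K(t))]. Then C(0) = 0, C'(0) = 0, and C''(0) = K''(0). -/

import Mathlib

/-- with A, K twice differentiable at 0, vanishing to second order,
nonnegative, and W > 0 constant, the CLR functional
C(t) = (1/2)[A(t) − W + √((A(t) − W)² + 4WK(t))] satisfies
C(0) = 0, C'(0) = 0 and C''(0) = K''(0). -/
theorem stmt7 (A K : ℝ → ℝ) (W : ℝ) (hW : 0 < W)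
    (hAdiff : ∀ᶠ t in nhds (0 : ℝ), DifferentiableAt ℝ A t)
    (hAdiff2 : DifferentiableAt ℝ (deriv A) 0)
    (hKdiff : ∀ᶠ t in nhds (0 : ℝ), DifferentiableAt ℝ K t)
    (hKdiff2 : DifferentiableAt ℝ (deriv K) 0)
    (hA0 : A 0 = 0) (hK0 : K 0 = 0)
    (hA'0 : deriv A 0 = 0) (hK'0 : deriv K 0 = 0)
    (hAnn : ∀ t, 0 ≤ A t) (hKnn : ∀ t, 0 ≤ K t)
    (C : ℝ → ℝ)
    (hC : ∀ t, C t = (1 / 2) * (A t - W + Real.sqrt ((A t - W) ^ 2 + 4 * W * K t))) :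
    C 0 = 0 ∧ deriv C 0 = 0 ∧ deriv (deriv C) 0 = deriv (deriv K) 0 := by
  set Q : ℝ → ℝ := fun t => (A t - W) ^ 2 + 4 * W * K t with hQdef
  set S : ℝ → ℝ := fun t => Real.sqrt (Q t) with hSdef
  have hQ0 : Q 0 = W ^ 2 := by show (A 0 - W) ^ 2 + 4 * W * K 0 = W ^ 2; rw [hA0, hK0]; ring
  have hS0 : S 0 = W := by rw [hSdef]; simp only [hQ0]; exact Real.sqrt_sq hW.le
  have hQ0pos : 0 < Q 0 := by rw [hQ0]; positivity
  have hAc : ContinuousAt A 0 := hAdiff.self_of_nhds.continuousAt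
  have hKc : ContinuousAt K 0 := hKdiff.self_of_nhds.continuousAt
  have hQc : ContinuousAt Q 0 :=
    ((hAc.sub continuousAt_const).pow 2).add (continuousAt_const.mul hKc)
  have hQpos : ∀ᶠ t in nhds (0 : ℝ), 0 < Q t := hQc.eventually (eventually_gt_nhds hQ0pos)
  set c' : ℝ → ℝ := fun t =>
    (1 / 2) * (deriv A t + ((A t - W) * deriv A t + 2 * W * deriv K t) / S t) with hc'def
  have key : ∀ᶠ t in nhds (0 : ℝ), HasDerivAt C (c' t) t := by
    filter_upwards [hAdiff, hKdiff, hQpos] with t hA hK hQt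
    have hSt : 0 < S t := Real.sqrt_pos.mpr hQt
    have hQd : HasDerivAt Q (2 * (A t - W) * deriv A t + 4 * W * deriv K t) t := by
      have h := ((hA.hasDerivAt.sub_const W).pow 2).add (hK.hasDerivAt.const_mul (4 * W))
      exact h.congr_deriv (by norm_num)
    have hSd : HasDerivAt S
        (1 / (2 * Real.sqrt (Q t)) * (2 * (A t - W) * deriv A t + 4 * W * deriv K t)) t :=
      (Real.hasDerivAt_sqrt hQt.ne').comp t hQd
    have h2 : HasDerivAt (fun t => (1 / 2) * (A t - W + S t))
        ((1 / 2) * (deriv A t +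
          1 / (2 * Real.sqrt (Q t)) * (2 * (A t - W) * deriv A t + 4 * W * deriv K t))) t :=
      ((hA.hasDerivAt.sub_const W).add hSd).const_mul (1 / 2)
    have hCf : C = fun t => (1 / 2) * (A t - W + S t) := funext hC
    rw [hCf]
    convert h2 using 1
    rw [hc'def]
    have hSQ : S t = Real.sqrt (Q t) := rfl
    field_simp [hSQ]
    ring
  have hderivC : deriv C =ᶠ[nhds (0 : ℝ)] c' := key.mono fun t h => h.deriv
  have hC0 : C 0 = 0 := by
    rw [hC 0, hA0, hK0]
    have : (0 - W) ^ 2 + 4 * W * 0 = W ^ 2 := by ring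
    rw [this, Real.sqrt_sq hW.le]
    ring
  have hc'0 : c' 0 = 0 := by
    rw [hc'def]
    simp only [hA'0, hK'0, hA0, hS0]
    ring
  have hC'0 : deriv C 0 = 0 := by
    rw [key.self_of_nhds.deriv, hc'0]
  refine ⟨hC0, hC'0, ?_⟩
  rw [hderivC.deriv_eq]
  -- compute deriv c' 0
  have hA0d : HasDerivAt A 0 0 := by
    have h := hAdiff.self_of_nhds.hasDerivAt; rwa [hA'0] at h
  have hK0d : HasDerivAt K 0 0 := by
    have h := hKdiff.self_of_nhds.hasDerivAt; rwa [hK'0] at h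
  have hA'd : HasDerivAt (deriv A) (deriv (deriv A) 0) 0 := hAdiff2.hasDerivAt
  have hK'd : HasDerivAt (deriv K) (deriv (deriv K) 0) 0 := hKdiff2.hasDerivAt
  have hNd : HasDerivAt (fun t => (A t - W) * deriv A t + 2 * W * deriv K t)
      ((0 * deriv A 0 + (A 0 - W) * deriv (deriv A) 0) + 2 * W * deriv (deriv K) 0) 0 :=
    ((hA0d.sub_const W).mul hA'd).add (hK'd.const_mul (2 * W))
  have hQd0 : HasDerivAt Q (2 * (A 0 - W) * 0 + 4 * W * 0) 0 := by
    have h := ((hA0d.sub_const W).pow 2).add (hK0d.const_mul (4 * W))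
    exact h.congr_deriv (by norm_num)
  have hSd0 : HasDerivAt S (1 / (2 * Real.sqrt (Q 0)) * (2 * (A 0 - W) * 0 + 4 * W * 0)) 0 :=
    (Real.hasDerivAt_sqrt hQ0pos.ne').comp 0 hQd0
  have hS0ne : S 0 ≠ 0 := by rw [hS0]; exact hW.ne'
  have hdiv : HasDerivAt (fun t => ((A t - W) * deriv A t + 2 * W * deriv K t) / S t)
      ((((0 * deriv A 0 + (A 0 - W) * deriv (deriv A) 0) + 2 * W * deriv (deriv K) 0) * S 0 -
        ((A 0 - W) * deriv A 0 + 2 * W * deriv K 0) *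
          (1 / (2 * Real.sqrt (Q 0)) * (2 * (A 0 - W) * 0 + 4 * W * 0))) / S 0 ^ 2) 0 :=
    hNd.div hSd0 hS0ne
  have hc'd : HasDerivAt c'
      ((1 / 2) * (deriv (deriv A) 0 +
        (((0 * deriv A 0 + (A 0 - W) * deriv (deriv A) 0) + 2 * W * deriv (deriv K) 0) * S 0 -
        ((A 0 - W) * deriv A 0 + 2 * W * deriv K 0) *
          (1 / (2 * Real.sqrt (Q 0)) * (2 * (A 0 - W) * 0 + 4 * W * 0))) / S 0 ^ 2)) 0 :=
    (hA'd.add hdiv).const_mul (1 / 2)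
  rw [hc'd.deriv]
  rw [hA0, hA'0, hK'0, hS0]
  field_simp
  ring
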